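/- arXiv:2603.29575 — 7 statements merged into one kernel-verified Lean document; each statement's English description precedes it below -/
import Mathlib

section
/- Let ρ: ℝ → ℝ be convex and twice differentiable with ψ = ρ'. For fixed x ∈ ℝ and c > 0, the map c ↦ prox(cρ)(x) is differentiable with derivative ∂/∂c prox(cρ)(x) = −ψ(prox(cρ)(x)) / (1 + c·ψ'(prox(cρ)(x))). -/
open Filter Topology Set

/-- Derivative of the proximal map `c ↦ prox(cρ)(x)`, where `prox(cρ)(x)` is the
unique solution `y` of `y + c·ψ(y) = x`. -/
theorem stmt1 (ρ ψ ψd : ℝ → ℝ)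
    (hconv : ConvexOn ℝ Set.univ ρ)
    (hρ : ∀ t, HasDerivAt ρ (ψ t) t)
    (hψ : ∀ t, HasDerivAt ψ (ψd t) t)
    (x : ℝ) (P : ℝ → ℝ)
    (hP : ∀ c : ℝ, 0 < c → P c + c * ψ (P c) = x) :
    ∀ c : ℝ, 0 < c →
      HasDerivAt P (-(ψ (P c)) / (1 + c * ψd (P c))) c := by
  -- ψ is monotone
  have hmono : Monotone ψ := by
    have h := hconv.monotoneOn_deriv (fun t _ => (hρ t).differentiableAt)
    intro a b hab
    have ha := (hρ a).deriv
    have hb := (hρ b).deriv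
    have := h (mem_univ a) (mem_univ b) hab
    rwa [ha, hb] at this
  -- slopes of ψ are nonneg
  have hslope : ∀ a b : ℝ, 0 ≤ slope ψ a b := by
    intro a b
    rcases le_total a b with h | h
    · rw [slope_def_field]
      exact div_nonneg (by linarith [hmono h]) (by linarith)
    · rw [slope_def_field]
      have := hmono h
      rcases eq_or_lt_of_le h with rfl | h'
      · simp
      · exact div_nonneg_iff.mpr (Or.inr ⟨by linarith, by linarith⟩)
  -- ψd is nonneg
  have hψd_nonneg : ∀ t, 0 ≤ ψd t := by
    intro t
    have h := hasDerivAt_iff_tendsto_slope.mp (hψ t)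
    have h' : Tendsto (slope ψ t) (𝓝[>] t) (𝓝 (ψd t)) :=
      h.mono_left (nhdsWithin_mono _ fun y hy => ne_of_gt hy)
    exact ge_of_tendsto h' (Eventually.of_forall fun y => hslope t y)
  intro c hc
  set y0 := P c with hy0
  -- key difference identity
  have hdiff : ∀ c' : ℝ, 0 < c' →
      (P c' - y0) + c' * (ψ (P c') - ψ y0) = -(c' - c) * ψ y0 := by
    intro c' hc'
    have h1 := hP c' hc'
    have h2 := hP c hc
    ring_nf
    nlinarith [h1, h2]
  -- Lipschitz bound
  have hlip : ∀ c' : ℝ, 0 < c' → |P c' - y0| ≤ |c' - c| * |ψ y0| := by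
    intro c' hc'
    have hd := hdiff c' hc'
    have hm : 0 ≤ (ψ (P c') - ψ y0) * (P c' - y0) := by
      rcases le_total y0 (P c') with h | h
      · exact mul_nonneg (by linarith [hmono h]) (by linarith)
      · have := hmono h
        nlinarith
    have hsq : (P c' - y0) ^ 2 ≤ -(c' - c) * ψ y0 * (P c' - y0) := by
      have hid : (P c' - y0) ^ 2 - (-(c' - c) * ψ y0) * (P c' - y0)
          = -(c' * ((ψ (P c') - ψ y0) * (P c' - y0))) := by
        linear_combination (P c' - y0) * hd
      nlinarith [mul_nonneg hc'.le hm]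
    have habs : |P c' - y0| ^ 2 ≤ |c' - c| * |ψ y0| * |P c' - y0| := by
      rw [sq_abs]
      calc (P c' - y0) ^ 2 ≤ -(c' - c) * ψ y0 * (P c' - y0) := hsq
        _ ≤ |(-(c' - c) * ψ y0) * (P c' - y0)| := le_abs_self _
        _ = |c' - c| * |ψ y0| * |P c' - y0| := by
            rw [abs_mul, abs_mul, abs_neg]
    rcases eq_or_lt_of_le (abs_nonneg (P c' - y0)) with h0 | h0
    · rw [← h0]; positivity
    · nlinarith [habs]
  -- continuity of P at c (within punctured nbhd)
  have hcont : Tendsto P (𝓝[≠] c) (𝓝 y0) := by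
    rw [tendsto_iff_norm_sub_tendsto_zero]
    have hbound : Tendsto (fun c' => |c' - c| * |ψ y0|) (𝓝[≠] c) (𝓝 0) := by
      have : Tendsto (fun c' : ℝ => |c' - c| * |ψ y0|) (𝓝 c) (𝓝 (|c - c| * |ψ y0|)) :=
        (((continuous_id.sub continuous_const).abs.mul continuous_const).tendsto c)
      simpa using this.mono_left nhdsWithin_le_nhds
    have hev : ∀ᶠ c' in 𝓝[≠] c, ‖P c' - y0‖ ≤ |c' - c| * |ψ y0| := by
      have hpos : ∀ᶠ c' in 𝓝[≠] c, 0 < c' :=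
        eventually_nhdsWithin_of_eventually_nhds (eventually_gt_nhds hc)
      filter_upwards [hpos] with c' hc'
      simpa [Real.norm_eq_abs] using hlip c' hc'
    exact squeeze_zero' (Eventually.of_forall fun _ => norm_nonneg _) hev hbound
  -- extended slope function
  set g : ℝ → ℝ := fun y => if y = y0 then ψd y0 else slope ψ y0 y with hg
  have hg_tendsto : Tendsto g (𝓝 y0) (𝓝 (ψd y0)) := by
    rw [← nhdsNE_sup_pure y0, tendsto_sup]
    constructor
    · have h := hasDerivAt_iff_tendsto_slope.mp (hψ y0)
      refine h.congr' ?_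
      filter_upwards [self_mem_nhdsWithin] with y hy
      simp only [Set.mem_compl_iff, Set.mem_singleton_iff] at hy
      simp [hg, hy]
    · have : g y0 = ψd y0 := by simp [hg]
      simpa [this] using tendsto_pure_nhds g y0
  have hgP : Tendsto (fun c' => g (P c')) (𝓝[≠] c) (𝓝 (ψd y0)) := hg_tendsto.comp hcont
  have hg_nonneg : ∀ y, 0 ≤ g y := by
    intro y
    by_cases hy : y = y0 <;> simp [hg, hy, hψd_nonneg, hslope]
  -- key slope identity
  have hkey : ∀ᶠ c' in 𝓝[≠] c,
      slope P c c' = -(ψ y0) / (1 + c' * g (P c')) := by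
    have hpos : ∀ᶠ c' in 𝓝[≠] c, 0 < c' :=
      eventually_nhdsWithin_of_eventually_nhds (eventually_gt_nhds hc)
    filter_upwards [hpos, self_mem_nhdsWithin] with c' hc' hne
    have hne' : c' - c ≠ 0 := sub_ne_zero.mpr hne
    have hd := hdiff c' hc'
    have hden : (0:ℝ) < 1 + c' * g (P c') :=
      lt_of_lt_of_le one_pos (by nlinarith [hg_nonneg (P c'), hc'.le])
    rw [slope_def_field]
    by_cases hPy : P c' = y0
    · have hψ0 : ψ y0 = 0 := by
        rw [hPy] at hd
        simp at hd
        rcases hd with h | h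
        · exact absurd (by linarith : c' = c) hne
        · exact h
      rw [hPy, hψ0]
      simp
      exact Or.inl (sub_eq_zero.mpr hy0)
    · have hgval : g (P c') = (ψ (P c') - ψ y0) / (P c' - y0) := by
        simp [hg, hPy, slope_def_field]
      have hPne : P c' - y0 ≠ 0 := sub_ne_zero.mpr hPy
      have hden' : 1 + c' * g (P c') ≠ 0 := hden.ne'
      rw [div_eq_div_iff hne' hden']
      calc (P c' - P c) * (1 + c' * g (P c'))
          = (P c' - y0) + c' * (ψ (P c') - ψ y0) := by
            rw [hgval, hy0]; have hPne' : P c' - P c ≠ 0 := hPne; field_simp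
        _ = -(ψ y0) * (c' - c) := by rw [hd]; ring
  -- conclude
  rw [hasDerivAt_iff_tendsto_slope]
  have hlim : Tendsto (fun c' => -(ψ y0) / (1 + c' * g (P c'))) (𝓝[≠] c)
      (𝓝 (-(ψ y0) / (1 + c * ψd y0))) := by
    have hden_ne : (1 + c * ψd y0) ≠ 0 := by
      have := hψd_nonneg y0
      nlinarith
    apply Tendsto.div tendsto_const_nhds _ hden_ne
    exact tendsto_const_nhds.add ((tendsto_nhdsWithin_of_tendsto_nhds tendsto_id
      |>.mono_left le_rfl).mul hgP)
  exact hlim.congr' (hkey.mono fun c' h => h.symm) |>.congr (fun _ => rfl)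
end

section
/- Let ρ: ℝ → ℝ be convex and twice differentiable with ψ = ρ'. For fixed x ∈ ℝ, the map c ↦ ρ(prox(cρ)(x)) is nonincreasing on (0, ∞); in fact its derivative equals −ψ²(prox(cρ)(x)) / (1 + c·ψ'(prox(cρ)(x))) ≤ 0. -/
/-- `c ↦ ρ(prox(cρ)(x))` is nonincreasing on `(0,∞)`, with derivative
`-ψ²(prox(cρ)(x)) / (1 + c ψ'(prox(cρ)(x))) ≤ 0`. -/
theorem stmt2 (ρ ψ ψd : ℝ → ℝ)
    (hconv : ConvexOn ℝ Set.univ ρ)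
    (hρ : ∀ t, HasDerivAt ρ (ψ t) t)
    (hψ : ∀ t, HasDerivAt ψ (ψd t) t)
    (x : ℝ) (P : ℝ → ℝ)
    (hP : ∀ c : ℝ, 0 < c → P c + c * ψ (P c) = x) :
    AntitoneOn (fun c => ρ (P c)) (Set.Ioi (0 : ℝ)) ∧
    ∀ c : ℝ, 0 < c →
      HasDerivAt (fun c => ρ (P c)) (-(ψ (P c)) ^ 2 / (1 + c * ψd (P c))) c ∧
      -(ψ (P c)) ^ 2 / (1 + c * ψd (P c)) ≤ 0 := by
  -- ψ is monotone
  have hderiv : deriv ρ = ψ := funext fun t => (hρ t).deriv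
  have hmonoψ : Monotone ψ := by
    have := hconv.monotoneOn_deriv (fun t _ => (hρ t).differentiableAt)
    rw [hderiv] at this
    exact monotoneOn_univ.mp this
  -- ψd is nonnegative
  have hψd : ∀ t, 0 ≤ ψd t := by
    intro t
    have hdiff : Set.Ioi t \ {t} = Set.Ioi t := by
      apply Set.diff_singleton_eq_self
      simp
    have h1 : Filter.Tendsto (slope ψ t) (nhdsWithin t (Set.Ioi t \ {t})) (nhds (ψd t)) :=
      hasDerivWithinAt_iff_tendsto_slope.mp ((hψ t).hasDerivWithinAt (s := Set.Ioi t))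
    rw [hdiff] at h1
    refine ge_of_tendsto h1 ?_
    filter_upwards [self_mem_nhdsWithin] with y hy
    have hty : t < y := hy
    rw [slope_def_field]
    apply div_nonneg
    · linarith [hmonoψ hty.le]
    · linarith
  have hden : ∀ c t, 0 < c → 0 < 1 + c * ψd t := by
    intro c t hc
    nlinarith [hψd t, mul_nonneg hc.le (hψd t)]
  -- main derivative claim
  have hmain : ∀ c : ℝ, 0 < c →
      HasDerivAt (fun c => ρ (P c)) (-(ψ (P c)) ^ 2 / (1 + c * ψd (P c))) c := by
    intro c hc
    by_cases hx : ψ x = 0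
    · -- P is constantly x on (0, ∞)
      have hPx : ∀ c' : ℝ, 0 < c' → P c' = x := by
        intro c' hc'
        have hsm : StrictMono (fun t => t + c' * ψ t) := by
          apply strictMono_of_deriv_pos
          intro t
          have hD : HasDerivAt (fun t => t + c' * ψ t) (1 + c' * ψd t) t := by
            exact (hasDerivAt_id t).add ((hψ t).const_mul c')
          rw [hD.deriv]
          exact hden c' t hc'
        have h1 : P c' + c' * ψ (P c') = x + c' * ψ x := by
          rw [hP c' hc', hx]; ring
        exact hsm.injective h1
      have hev : (fun c => ρ (P c)) =ᶠ[nhds c] fun _ => ρ x := by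
        filter_upwards [Ioi_mem_nhds hc] with y hy
        rw [hPx y hy]
      have h0 : HasDerivAt (fun c => ρ (P c)) 0 c :=
        (hasDerivAt_const c (ρ x)).congr_of_eventuallyEq hev
      convert h0 using 1
      rw [hPx c hc, hx]
      simp
    · -- ψ (P c') ≠ 0 for all c' > 0
      have hne : ∀ c' : ℝ, 0 < c' → ψ (P c') ≠ 0 := by
        intro c' hc' h0
        have h1 := hP c' hc'
        rw [h0] at h1
        have : P c' = x := by linarith
        rw [this] at h0
        exact hx h0
      set b := P c with hb
      have h2 : b + c * ψ b = x := hP c hc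
      have hbne : ψ b ≠ 0 := hne c hc
      -- continuity of P at c via Lipschitz estimate
      have key : ∀ y, 0 < y → |P y - P c| ≤ |ψ (P c)| * |y - c| := by
        intro y hy
        set a := P y with ha
        have h1 : a + y * ψ a = x := hP y hy
        have hmm : 0 ≤ (ψ a - ψ b) * (a - b) := by
          rcases le_total a b with h | h
          · have := hmonoψ h; nlinarith
          · have := hmonoψ h; nlinarith
        have haeq : a - b = c * ψ b - y * ψ a := by linarith
        have hmul : (a - b) * (a - b) = (a - b) * (c * ψ b - y * ψ a) := by rw [← haeq]
        have hsq : (a - b) ^ 2 ≤ (c - y) * ψ b * (a - b) := by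
          nlinarith [mul_nonneg hy.le hmm, hmul]
        rcases eq_or_ne a b with h | h
        · rw [h, sub_self, abs_zero]
          positivity
        · have habs : (a - b) ^ 2 ≤ |ψ b| * |y - c| * |a - b| := by
            calc (a - b) ^ 2 ≤ (c - y) * ψ b * (a - b) := hsq
              _ ≤ |(c - y) * ψ b * (a - b)| := le_abs_self _
              _ = |ψ b| * |y - c| * |a - b| := by
                  rw [abs_mul, abs_mul, abs_sub_comm c y]; ring
          have hab : 0 < |a - b| := abs_pos.mpr (sub_ne_zero.mpr h)
          have hsq2 : |a - b| * |a - b| ≤ (|ψ b| * |y - c|) * |a - b| := by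
            calc |a - b| * |a - b| = (a - b) ^ 2 := by rw [← abs_mul, abs_mul_self]; ring
              _ ≤ |ψ b| * |y - c| * |a - b| := habs
          exact le_of_mul_le_mul_right hsq2 hab
      have hcont : ContinuousAt P c := by
        apply continuousAt_of_locally_lipschitz hc (|ψ (P c)|)
        intro y hyd
        rw [Real.dist_eq] at hyd
        have hy : 0 < y := by
          rcases abs_lt.mp hyd with ⟨h1, _⟩; linarith
        rw [Real.dist_eq, Real.dist_eq]
        exact key y hy
      -- g is a local left inverse of P
      have hg : HasDerivAt (fun t => (x - t) / ψ t) (-(1 + c * ψd b) / ψ b) b := by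
        have hnum : HasDerivAt (fun t => x - t) (-1) b := by
          simpa using (hasDerivAt_id b).const_sub x
        have h3 : HasDerivAt (fun t => (x - t) / ψ t)
            (((-1) * ψ b - (x - b) * ψd b) / (ψ b) ^ 2) b := hnum.div (hψ b) hbne
        convert h3 using 1
        have hxb : x - b = c * ψ b := by linarith
        rw [hxb]
        field_simp
        ring
      have hg' : -(1 + c * ψd b) / ψ b ≠ 0 :=
        div_ne_zero (by have := hden c b hc; intro h; rw [neg_eq_zero] at h; linarith) hbne
      have hev : ∀ᶠ y in nhds c, (x - P y) / ψ (P y) = y := by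
        filter_upwards [Ioi_mem_nhds hc] with y hy
        have h1 : x - P y = y * ψ (P y) := by have := hP y hy; linarith
        rw [h1, mul_div_assoc, div_self (hne y hy), mul_one]
      have hP' : HasDerivAt P (-(1 + c * ψd b) / ψ b)⁻¹ c :=
        HasDerivAt.of_local_left_inverse hcont hg hg' hev
      have hcomp : HasDerivAt (fun c => ρ (P c)) (ψ b * (-(1 + c * ψd b) / ψ b)⁻¹) c :=
        (hρ b).comp c hP'
      rw [inv_div, ← mul_div_assoc, div_neg, ← sq, ← neg_div] at hcomp
      exact hcomp
  refine ⟨?_, fun c hc => ⟨hmain c hc, ?_⟩⟩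
  · apply antitoneOn_of_deriv_nonpos (convex_Ioi 0)
    · intro c hc
      exact (hmain c hc).continuousAt.continuousWithinAt
    · intro c hc
      rw [interior_Ioi] at hc
      exact (hmain c hc).differentiableAt.differentiableWithinAt
    · intro c hc
      rw [interior_Ioi] at hc
      rw [(hmain c hc).deriv]
      apply div_nonpos_of_nonpos_of_nonneg
      · simp [sq_nonneg]
      · linarith [hden c (P c) hc]
  · apply div_nonpos_of_nonpos_of_nonneg
    · simp [sq_nonneg]
    · linarith [hden c (P c) hc]
end

section
/- Let 𝔖 be a p×p symmetric positive semidefinite matrix, v ∈ ℝᵖ, d ≥ 0, τ > 0, and 𝔖' = 𝔖 + d·vvᵀ. Then 0 ≤ tr((𝔖 + τI)⁻¹) − tr((𝔖' + τI)⁻¹) ≤ 1/τ. -/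
open Matrix

section aux

variable {n : Type*} [Fintype n] [DecidableEq n]

private lemma aux_mul_vecMulVec (M : Matrix n n ℝ) (a b : n → ℝ) :
    M * Matrix.vecMulVec a b = Matrix.vecMulVec (M *ᵥ a) b := by
  ext i j
  simp only [Matrix.mul_apply, Matrix.vecMulVec_apply, Matrix.mulVec, dotProduct,
    Finset.sum_mul]
  exact Finset.sum_congr rfl fun k _ => by ring

private lemma aux_vecMulVec_mul (M : Matrix n n ℝ) (a b : n → ℝ) :
    Matrix.vecMulVec a b * M = Matrix.vecMulVec a (b ᵥ* M) := by
  ext i j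
  simp only [Matrix.mul_apply, Matrix.vecMulVec_apply, Matrix.vecMul, dotProduct,
    Finset.mul_sum]
  exact Finset.sum_congr rfl fun k _ => by ring

private lemma aux_vecMulVec_mul_vecMulVec (a b c e : n → ℝ) :
    Matrix.vecMulVec a b * Matrix.vecMulVec c e
      = (b ⬝ᵥ c) • Matrix.vecMulVec a e := by
  ext i j
  simp only [Matrix.mul_apply, Matrix.vecMulVec_apply, Matrix.smul_apply, dotProduct,
    Finset.sum_mul, smul_eq_mul]
  exact Finset.sum_congr rfl fun k _ => by ring

private lemma aux_trace_vecMulVec (a b : n → ℝ) :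
    (Matrix.vecMulVec a b).trace = a ⬝ᵥ b := by
  simp [Matrix.trace, Matrix.vecMulVec_apply, Matrix.diag, dotProduct]

end aux

/-- Rank-one update trace bound: for PSD `𝔖`, `d ≥ 0`, `τ > 0`, and
`𝔖' = 𝔖 + d·vvᵀ`, we have `0 ≤ tr((𝔖+τI)⁻¹) - tr((𝔖'+τI)⁻¹) ≤ 1/τ`. -/
theorem stmt15 (p : ℕ)
    (𝔖 : Matrix (Fin p) (Fin p) ℝ) (h𝔖 : 𝔖.PosSemidef)
    (v : Fin p → ℝ) (d τ : ℝ) (hd : 0 ≤ d) (hτ : 0 < τ) :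
    0 ≤ ((𝔖 + τ • 1)⁻¹).trace -
        ((𝔖 + d • Matrix.vecMulVec v v + τ • 1)⁻¹).trace ∧
    ((𝔖 + τ • 1)⁻¹).trace -
        ((𝔖 + d • Matrix.vecMulVec v v + τ • 1)⁻¹).trace ≤ 1 / τ := by
  classical
  set A : Matrix (Fin p) (Fin p) ℝ := 𝔖 + τ • 1 with hAdef
  -- τ • 1 is positive definite
  have hτ1 : (τ • (1 : Matrix (Fin p) (Fin p) ℝ)).PosDef := by
    refine Matrix.PosDef.of_dotProduct_mulVec_pos ?_ (fun x hx => ?_)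
    · simp [Matrix.IsHermitian]
    · have hx2 : 0 < x ⬝ᵥ x := by
        have := Matrix.dotProduct_star_self_pos_iff (v := x)
        simpa using this.mpr hx
      have : star x ⬝ᵥ ((τ • (1 : Matrix (Fin p) (Fin p) ℝ)) *ᵥ x) = τ * (x ⬝ᵥ x) := by
        simp [Matrix.smul_mulVec, dotProduct_smul]
      rw [this]
      positivity
  have hA : A.PosDef := Matrix.PosDef.posSemidef_add h𝔖 hτ1
  have hAdet : IsUnit A.det := isUnit_iff_ne_zero.mpr hA.det_pos.ne'
  have hAN : A * A⁻¹ = 1 := Matrix.mul_nonsing_inv A hAdet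
  set N : Matrix (Fin p) (Fin p) ℝ := A⁻¹ with hNdef
  have hN : N.PosDef := hA.inv
  have hNT : Nᵀ = N := by
    have := hN.isHermitian
    simpa [Matrix.IsHermitian] using this
  set w : Fin p → ℝ := N *ᵥ v with hwdef
  set s : ℝ := v ⬝ᵥ w with hsdef
  have hs : 0 ≤ s := by
    have := hN.posSemidef.dotProduct_mulVec_nonneg v
    simpa [hsdef, hwdef] using this
  have hden : 0 < 1 + d * s := by positivity
  set c : ℝ := d / (1 + d * s) with hcdef
  have hc : 0 ≤ c := div_nonneg hd hden.le
  have hcden : c * (1 + d * s) = d := div_mul_cancel₀ d hden.ne'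
  -- rewrite the second matrix
  have hBdef : 𝔖 + d • Matrix.vecMulVec v v + τ • 1
      = A + d • Matrix.vecMulVec v v := by
    rw [hAdef]; abel
  set C : Matrix (Fin p) (Fin p) ℝ := N - c • Matrix.vecMulVec w w with hCdef
  -- key algebraic facts
  have hAw : A *ᵥ w = v := by
    rw [hwdef, Matrix.mulVec_mulVec, hAN, Matrix.one_mulVec]
  have hvN : v ᵥ* N = w := by
    rw [← hNT, Matrix.vecMul_transpose]
  -- Sherman–Morrison: (A + d vvᵀ) * C = 1
  have hSM : (A + d • Matrix.vecMulVec v v) * C = 1 := by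
    rw [hCdef]
    have e1 : A * Matrix.vecMulVec w w = Matrix.vecMulVec v w := by
      rw [aux_mul_vecMulVec, hAw]
    have e2 : Matrix.vecMulVec v v * N = Matrix.vecMulVec v w := by
      rw [aux_vecMulVec_mul, hvN]
    have e3 : Matrix.vecMulVec v v * Matrix.vecMulVec w w
        = s • Matrix.vecMulVec v w := by
      rw [aux_vecMulVec_mul_vecMulVec, hsdef]
    rw [Matrix.add_mul, Matrix.mul_sub, Matrix.mul_sub, hAN,
      Matrix.mul_smul, e1, Matrix.smul_mul, Matrix.smul_mul, e2,
      Matrix.mul_smul, e3]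
    match_scalars <;> first
      | ring1
      | linear_combination (-1 : ℝ) * hcden
  have hBinv : (A + d • Matrix.vecMulVec v v)⁻¹ = C :=
    Matrix.inv_eq_right_inv hSM
  -- trace computation
  have hww : 0 ≤ w ⬝ᵥ w := by
    have := dotProduct_star_self_nonneg w
    simpa using this
  have htr : ((𝔖 + d • Matrix.vecMulVec v v + τ • 1)⁻¹).trace
      = N.trace - c * (w ⬝ᵥ w) := by
    rw [hBdef, hBinv, hCdef, Matrix.trace_sub, Matrix.trace_smul,
      aux_trace_vecMulVec, smul_eq_mul]
  have hgoal : ((𝔖 + τ • 1)⁻¹).trace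
        - ((𝔖 + d • Matrix.vecMulVec v v + τ • 1)⁻¹).trace = c * (w ⬝ᵥ w) := by
    rw [htr, ← hAdef, ← hNdef]
    ring
  rw [hgoal]
  constructor
  · positivity
  -- upper bound
  · -- τ * (w ⬝ᵥ w) ≤ s
    have hkey : τ * (w ⬝ᵥ w) ≤ s := by
      have h1 : s = w ⬝ᵥ (A *ᵥ w) := by
        rw [hsdef, ← hAw, dotProduct_comm, hAw]
      have h2 : w ⬝ᵥ (A *ᵥ w) = w ⬝ᵥ (𝔖 *ᵥ w) + τ * (w ⬝ᵥ w) := by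
        rw [hAdef, Matrix.add_mulVec, dotProduct_add,
          Matrix.smul_mulVec, Matrix.one_mulVec, dotProduct_smul,
          smul_eq_mul]
      have h3 : 0 ≤ w ⬝ᵥ (𝔖 *ᵥ w) := by
        have := h𝔖.dotProduct_mulVec_nonneg w
        simpa using this
      linarith [h1, h2, h3]
    -- c * s ≤ 1
    have hcs : c * s ≤ 1 := by nlinarith [hcden]
    have : c * (w ⬝ᵥ w) * τ ≤ 1 := by nlinarith
    exact (le_div_iff₀ hτ).mpr this
end

section
/- Let S be a symmetric p×p PSD matrix written in block form S = [[Γ, v],[vᵀ, a]] where Γ is (p−1)×(p−1) PSD, v ∈ ℝ^{p−1}, a ≥ 0, and τ > 0. Then |tr((S + τI_p)⁻¹) − tr((Γ + τI_{p−1})⁻¹)| ≤ (1 + a/τ)/τ. -/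
open Matrix

lemma rowMcol {m : ℕ} (v : Fin m → ℝ) (M : Matrix (Fin m) (Fin m) ℝ) (i j : Unit) :
    ((Matrix.of fun (_ : Unit) j => v j) * M * (Matrix.of fun i (_ : Unit) => v i)) i j
      = v ⬝ᵥ M *ᵥ v := by
  simp [Matrix.mul_apply, dotProduct, mulVec, Finset.sum_mul, mul_assoc]
  rw [Finset.sum_comm]
  simp [Finset.mul_sum]

lemma rowTMcol {m : ℕ} (v : Fin m → ℝ) (M : Matrix (Fin m) (Fin m) ℝ) (i j : Unit) :
    ((Matrix.of fun i (_ : Unit) => v i)ᵀ * M * (Matrix.of fun i (_ : Unit) => v i)) i j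
      = v ⬝ᵥ M *ᵥ v := by
  simp [Matrix.mul_apply, dotProduct, mulVec, Finset.sum_mul, mul_assoc]
  rw [Finset.sum_comm]
  simp [Finset.mul_sum]

lemma trace_fromBlocks' {n p : Type*} [Fintype n] [Fintype p]
    (A : Matrix n n ℝ) (B : Matrix n p ℝ) (C : Matrix p n ℝ) (D : Matrix p p ℝ) :
    (Matrix.fromBlocks A B C D).trace = A.trace + D.trace := by
  simp [Matrix.trace, Fintype.sum_sum_type, Matrix.diag, fromBlocks]

/-- Block-matrix trace perturbation bound: if the PSD matrix `S` has block form
`[[Γ, v],[vᵀ, a]]` with `a ≥ 0` and `τ > 0`, then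
`|tr((S+τI)⁻¹) - tr((Γ+τI)⁻¹)| ≤ (1 + a/τ)/τ`. -/
theorem stmt16 (m : ℕ)
    (Γ : Matrix (Fin m) (Fin m) ℝ) (v : Fin m → ℝ) (a τ : ℝ)
    (ha : 0 ≤ a) (hτ : 0 < τ)
    (S : Matrix (Fin m ⊕ Unit) (Fin m ⊕ Unit) ℝ)
    (hSdef : S = Matrix.fromBlocks Γ
      (Matrix.of fun i (_ : Unit) => v i)
      (Matrix.of fun (_ : Unit) j => v j)
      (Matrix.of fun (_ : Unit) (_ : Unit) => a))
    (hS : S.PosSemidef) :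
    |((S + τ • 1)⁻¹).trace - ((Γ + τ • 1)⁻¹).trace| ≤ (1 + a / τ) / τ := by
  set A : Matrix (Fin m) (Fin m) ℝ := Γ + τ • 1 with hAdef
  set col : Matrix (Fin m) Unit ℝ := Matrix.of fun i (_ : Unit) => v i with hcol
  set row : Matrix Unit (Fin m) ℝ := Matrix.of fun (_ : Unit) j => v j with hrow
  have hct : colᴴ = row := by ext i j; simp [hcol, hrow]
  have hct2 : colᵀ = row := by ext i j; simp [hcol, hrow]
  -- Γ is PSD
  have hΓ : Γ.PosSemidef := by
    have h := hS.submatrix Sum.inl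
    have h2 : S.submatrix Sum.inl Sum.inl = Γ := by
      subst hSdef; ext i j; simp
    rwa [h2] at h
  have hτ1 : (τ • 1 : Matrix (Fin m) (Fin m) ℝ).PosDef := by
    rw [smul_one_eq_diagonal]
    exact posDef_diagonal_iff.mpr fun _ => hτ
  have hA : A.PosDef := Matrix.PosDef.posSemidef_add hΓ hτ1
  haveI hAinv : Invertible A := hA.isUnit.invertible
  -- q := v ⬝ᵥ A⁻¹ v and its bounds
  set q : ℝ := v ⬝ᵥ A⁻¹ *ᵥ v with hq
  -- key PSD fact: a - q ≥ 0
  have hqa : q ≤ a := by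
    have hM : (Matrix.fromBlocks A col colᴴ
        (Matrix.of fun (_ : Unit) (_ : Unit) => a)).PosSemidef := by
      have hblk : (Matrix.fromBlocks (τ • 1 : Matrix (Fin m) (Fin m) ℝ) 0 0
          (0 : Matrix Unit Unit ℝ)).PosSemidef := by
        refine Matrix.PosSemidef.of_dotProduct_mulVec_nonneg ?_ ?_
        · exact Matrix.isHermitian_fromBlocks_iff.mpr
            ⟨hτ1.1, by simp, by simp, Matrix.isHermitian_zero⟩
        · intro x
          rw [← Sum.elim_comp_inl_inr x, Matrix.fromBlocks_mulVec]
          simp [Function.star_sumElim, sumElim_dotProduct_sumElim, smul_mulVec,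
            dotProduct, mulVec]
          exact Finset.sum_nonneg fun i _ => by nlinarith [mul_self_nonneg (x (Sum.inl i))]
      have heq : Matrix.fromBlocks A col colᴴ (Matrix.of fun (_ : Unit) (_ : Unit) => a)
          = S + Matrix.fromBlocks (τ • 1) 0 0 0 := by
        rw [hSdef, Matrix.fromBlocks_add]
        simp [hct2, hAdef]
      rw [heq]
      exact hS.add hblk
    have := (Matrix.PosDef.fromBlocks₁₁ col
      (Matrix.of fun (_ : Unit) (_ : Unit) => a) hA).mp hM
    have h0 := this.dotProduct_mulVec_nonneg (fun _ => (1:ℝ))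
    simp [dotProduct, mulVec, Matrix.sub_apply] at h0
    rw [hcol] at h0
    rw [rowTMcol] at h0
    simpa [hq] using h0
  -- q ≥ 0
  have hq0 : 0 ≤ q := by
    have h := hA.inv.posSemidef.dotProduct_mulVec_nonneg v
    simpa [hq] using h
  -- set up the Schur complement of S + τ•1
  set D1 : Matrix Unit Unit ℝ := Matrix.of fun (_ : Unit) (_ : Unit) => a + τ with hD1
  set Ds : Matrix Unit Unit ℝ := D1 - colᴴ * ⅟A * col with hDs
  have hinvA : (⅟A : Matrix (Fin m) (Fin m) ℝ) = A⁻¹ := invOf_eq_nonsing_inv A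
  have hDsEntry : ∀ i j : Unit, Ds i j = a + τ - q := by
    intro i j
    rw [hDs, Matrix.sub_apply, hinvA, hct, hrow, hcol, rowMcol, hD1]
    simp [hq]
  have hspos : (0:ℝ) < a + τ - q := by linarith
  haveI iDs : Invertible Ds := by
    apply Matrix.invertibleOfIsUnitDet
    rw [Matrix.det_unique, hDsEntry]
    exact (isUnit_iff_ne_zero.mpr (ne_of_gt hspos))
  have hDsInv : ∀ i j : Unit, (⅟Ds : Matrix Unit Unit ℝ) i j = (a + τ - q)⁻¹ := by
    intro i j
    have h1 : (⅟Ds * Ds) i j = 1 := by rw [invOf_mul_self]; simp [Matrix.one_apply]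
    rw [Matrix.mul_apply] at h1
    simp only [Finset.univ_unique, Finset.sum_singleton] at h1
    rw [hDsEntry] at h1
    rw [inv_eq_one_div, eq_div_iff (ne_of_gt hspos)]
    exact h1
  -- the block decomposition of S + τ•1
  have hTeq : S + τ • 1 = Matrix.fromBlocks A col colᴴ D1 := by
    ext i j
    rcases i with i | i <;> rcases j with j | j <;>
      simp [hSdef, Matrix.add_apply, Matrix.one_apply, hAdef, hcol, hrow, hD1,
        Matrix.conjTranspose_apply]
  haveI iT : Invertible (Matrix.fromBlocks A col colᴴ D1) :=
    Matrix.fromBlocks₁₁Invertible A col colᴴ D1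
  have hTinv : (Matrix.fromBlocks A col colᴴ D1)⁻¹ =
      Matrix.fromBlocks (⅟A + ⅟A * col * ⅟Ds * colᴴ * ⅟A) (-(⅟A * col * ⅟Ds))
        (-(⅟Ds * colᴴ * ⅟A)) (⅟Ds) := by
    rw [← invOf_eq_nonsing_inv, Matrix.invOf_fromBlocks₁₁_eq]
  -- scalars
  set x : Fin m → ℝ := A⁻¹ *ᵥ v with hx
  set n2 : ℝ := x ⬝ᵥ x with hn2
  have hsym : A⁻¹ᵀ = A⁻¹ := by
    rw [← Matrix.conjTranspose_eq_transpose_of_trivial]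
    exact hA.inv.1
  have traceU : ∀ M : Matrix Unit Unit ℝ, M.trace = M PUnit.unit PUnit.unit := by
    intro M; simp [Matrix.trace]
  have hvml : x = v ᵥ* A⁻¹ := by
    have h := Matrix.mulVec_transpose A⁻¹ v
    rw [hsym] at h
    exact h.symm ▸ rfl
  have hvA : v ⬝ᵥ (A⁻¹ * A⁻¹) *ᵥ v = n2 := by
    rw [← Matrix.mulVec_mulVec, Matrix.dotProduct_mulVec, ← hvml, hn2]
  -- trace of the correction block
  have hmid : (⅟A * col * ⅟Ds * colᴴ * ⅟A).trace = n2 * (a + τ - q)⁻¹ := by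
    rw [Matrix.trace_mul_comm, ← Matrix.mul_assoc, ← Matrix.mul_assoc, ← Matrix.mul_assoc,
      Matrix.trace_mul_comm, ← Matrix.mul_assoc, ← Matrix.mul_assoc, traceU, Matrix.mul_apply]
    simp only [Finset.univ_unique, Finset.sum_singleton]
    rw [hct, hinvA, hrow, hcol, rowMcol, hDsInv, hvA]
  -- the key trace identity
  have key : ((S + τ • 1)⁻¹).trace - A⁻¹.trace = n2 * (a + τ - q)⁻¹ + (a + τ - q)⁻¹ := by
    rw [hTeq, hTinv, trace_fromBlocks', Matrix.trace_add, hmid, traceU, hDsInv, hinvA]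
    ring
  rw [key]
  -- quadratic form facts
  have hn2nonneg : 0 ≤ n2 := Finset.sum_nonneg fun i _ => mul_self_nonneg _
  have hAx : A *ᵥ x = v := by
    rw [hx, Matrix.mulVec_mulVec, Matrix.mul_nonsing_inv A
      ((Matrix.isUnit_iff_isUnit_det A).mp hA.isUnit), Matrix.one_mulVec]
  have hΓx : 0 ≤ x ⬝ᵥ Γ *ᵥ x := by simpa using hΓ.dotProduct_mulVec_nonneg x
  have hτn2 : τ * n2 ≤ q := by
    have hq' : q = x ⬝ᵥ A *ᵥ x := by
      rw [hq, ← hAx, dotProduct_comm]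
    have hexp : x ⬝ᵥ A *ᵥ x = x ⬝ᵥ Γ *ᵥ x + τ * n2 := by
      rw [hAdef, Matrix.add_mulVec, dotProduct_add, Matrix.smul_mulVec,
        Matrix.one_mulVec, dotProduct_smul, smul_eq_mul, ← hn2]
    linarith [hq', hexp]
  have hnonneg : 0 ≤ n2 * (a + τ - q)⁻¹ + (a + τ - q)⁻¹ :=
    add_nonneg (mul_nonneg hn2nonneg (inv_nonneg.mpr hspos.le)) (inv_nonneg.mpr hspos.le)
  rw [abs_of_nonneg hnonneg]
  have h1 : n2 ≤ a / τ := by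
    rw [le_div_iff₀ hτ]
    nlinarith
  calc n2 * (a + τ - q)⁻¹ + (a + τ - q)⁻¹ = (n2 + 1) / (a + τ - q) := by
        rw [div_eq_mul_inv]; ring
    _ ≤ (a / τ + 1) / τ := by
        apply div_le_div₀ (by positivity) (by linarith) hτ (by linarith)
    _ = (1 + a / τ) / τ := by rw [add_comm]
end

section
/- Let ρ: ℝ → ℝ be convex and twice differentiable with ψ = ρ' such that ψ' is L-Lipschitz and ‖ψ‖_∞ < ∞. Then for all u ∈ ℝ and all c₁, c₂ ≥ 0, |ψ'(prox(c₁ρ)(u)) − ψ'(prox(c₂ρ)(u))| ≤ min(L·‖ψ‖_∞·|c₁ − c₂|, 2‖ψ'‖_∞). -/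
/-- Lipschitz bound on `c ↦ ψ'(prox(cρ)(u))`: if `ψ'` is `L`-Lipschitz,
`|ψ| ≤ Mψ` and `|ψ'| ≤ Mψd`, then for `c₁, c₂ ≥ 0` and solutions `yᵢ` of
`y + cᵢψ(y) = u`, `|ψ'(y₁) - ψ'(y₂)| ≤ min(L·Mψ·|c₁-c₂|, 2·Mψd)`. -/
theorem stmt17 (ρ ψ ψd : ℝ → ℝ)
    (hconv : ConvexOn ℝ Set.univ ρ)
    (hρ : ∀ t, HasDerivAt ρ (ψ t) t)
    (hψ : ∀ t, HasDerivAt ψ (ψd t) t)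
    (L : NNReal) (hLip : LipschitzWith L ψd)
    (Mψ Mψd : ℝ)
    (hMψ : ∀ t, |ψ t| ≤ Mψ) (hMψd : ∀ t, |ψd t| ≤ Mψd) :
    ∀ u c₁ c₂ : ℝ, 0 ≤ c₁ → 0 ≤ c₂ →
      ∀ y₁ y₂ : ℝ, y₁ + c₁ * ψ y₁ = u → y₂ + c₂ * ψ y₂ = u →
        |ψd y₁ - ψd y₂| ≤ min ((L : ℝ) * Mψ * |c₁ - c₂|) (2 * Mψd) := by
  -- ψ is monotone
  have hψmono : Monotone ψ := by
    have := hconv.monotoneOn_deriv (fun x _ => (hρ x).differentiableAt)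
    intro a b hab
    have h := this (Set.mem_univ a) (Set.mem_univ b) hab
    rwa [(hρ a).deriv, (hρ b).deriv] at h
  -- key: |y₁ - y₂| ≤ Mψ * |c₁ - c₂| for solutions
  have key : ∀ c₁ c₂ : ℝ, 0 ≤ c₁ → 0 ≤ c₂ → ∀ y₁ y₂ : ℝ,
      y₂ ≤ y₁ → y₁ + c₁ * ψ y₁ = y₂ + c₂ * ψ y₂ → y₁ - y₂ ≤ Mψ * |c₁ - c₂| := by
    intro c₁ c₂ hc₁ hc₂ y₁ y₂ hle heq
    have hψle : ψ y₂ ≤ ψ y₁ := hψmono hle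
    have : y₁ - y₂ = (c₂ - c₁) * ψ y₂ + c₁ * (ψ y₂ - ψ y₁) := by
      have : y₁ - y₂ = c₂ * ψ y₂ - c₁ * ψ y₁ := by linarith
      rw [this]; ring
    have h1 : c₁ * (ψ y₂ - ψ y₁) ≤ 0 :=
      mul_nonpos_of_nonneg_of_nonpos hc₁ (by linarith)
    have h2 : (c₂ - c₁) * ψ y₂ ≤ |c₂ - c₁| * |ψ y₂| := by
      calc (c₂ - c₁) * ψ y₂ ≤ |(c₂ - c₁) * ψ y₂| := le_abs_self _
        _ = |c₂ - c₁| * |ψ y₂| := abs_mul _ _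
    have h3 : |c₂ - c₁| * |ψ y₂| ≤ |c₂ - c₁| * Mψ :=
      mul_le_mul_of_nonneg_left (hMψ y₂) (abs_nonneg _)
    have h4 : |c₂ - c₁| = |c₁ - c₂| := abs_sub_comm _ _
    rw [h4] at h2 h3
    rw [mul_comm]
    linarith
  intro u c₁ c₂ hc₁ hc₂ y₁ y₂ h₁ h₂
  have heq : y₁ + c₁ * ψ y₁ = y₂ + c₂ * ψ y₂ := by rw [h₁, h₂]
  have hy : |y₁ - y₂| ≤ Mψ * |c₁ - c₂| := by
    rcases le_total y₂ y₁ with h | h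
    · rw [abs_of_nonneg (by linarith)]
      exact key c₁ c₂ hc₁ hc₂ y₁ y₂ h heq
    · rw [abs_of_nonpos (by linarith)]
      have := key c₂ c₁ hc₂ hc₁ y₂ y₁ h heq.symm
      rw [abs_sub_comm] at this; linarith
  refine le_min ?_ ?_
  · have := hLip.dist_le_mul y₁ y₂
    rw [Real.dist_eq, Real.dist_eq] at this
    calc |ψd y₁ - ψd y₂| ≤ (L : ℝ) * |y₁ - y₂| := this
      _ ≤ (L : ℝ) * (Mψ * |c₁ - c₂|) :=
        mul_le_mul_of_nonneg_left hy L.coe_nonneg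
      _ = (L : ℝ) * Mψ * |c₁ - c₂| := by ring
  · calc |ψd y₁ - ψd y₂| ≤ |ψd y₁| + |ψd y₂| := abs_sub _ _
      _ ≤ Mψd + Mψd := add_le_add (hMψd y₁) (hMψd y₂)
      _ = 2 * Mψd := by ring
end

section
/- Fix B > 0, λ ∈ ℝ, and let ρ: ℝ → ℝ be convex twice differentiable with ψ = ρ', ψ' L-Lipschitz, ‖ψ‖_∞ < ∞, ‖ψ'‖_∞ < ∞. Define h_u(x) = 1/(1 + xλ²ψ'(prox(xλ²ρ)(u))) for x ≥ 0. Then for all u ∈ ℝ and all 0 ≤ x, y ≤ B with |x − y| ≤ η, |h_u(x) − h_u(y)| ≤ η(λ²‖ψ'‖_∞ + B·L·λ⁴·‖ψ‖_∞). -/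
/-- Equicontinuity bound for `h_u(x) = 1/(1 + xλ²ψ'(prox(xλ²ρ)(u)))`:
for `0 ≤ x, y ≤ B` with `|x - y| ≤ η`,
`|h_u(x) - h_u(y)| ≤ η(λ²‖ψ'‖_∞ + B·L·λ⁴·‖ψ‖_∞)`. -/
theorem stmt18 (ρ ψ ψd : ℝ → ℝ)
    (hconv : ConvexOn ℝ Set.univ ρ)
    (hρ : ∀ t, HasDerivAt ρ (ψ t) t)
    (hψ : ∀ t, HasDerivAt ψ (ψd t) t)
    (hψd_nonneg : ∀ t, 0 ≤ ψd t)
    (L : NNReal) (hLip : LipschitzWith L ψd)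
    (Mψ Mψd : ℝ)
    (hMψ : ∀ t, |ψ t| ≤ Mψ) (hMψd : ∀ t, |ψd t| ≤ Mψd)
    (B η lam : ℝ) (hB : 0 < B)
    (P : ℝ → ℝ → ℝ)
    (hP : ∀ x u : ℝ, 0 ≤ x → P x u + x * lam ^ 2 * ψ (P x u) = u) :
    ∀ u x y : ℝ, 0 ≤ x → x ≤ B → 0 ≤ y → y ≤ B → |x - y| ≤ η →
      |1 / (1 + x * lam ^ 2 * ψd (P x u)) - 1 / (1 + y * lam ^ 2 * ψd (P y u))|
        ≤ η * (lam ^ 2 * Mψd + B * (L : ℝ) * lam ^ 4 * Mψ) := by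
  intro u x y hx hxB hy hyB hxy
  have hmono : Monotone ψ :=
    monotone_of_deriv_nonneg (fun t => (hψ t).differentiableAt)
      (fun t => by rw [(hψ t).deriv]; exact hψd_nonneg t)
  have hη : 0 ≤ η := le_trans (abs_nonneg _) hxy
  have hMψ0 : 0 ≤ Mψ := le_trans (abs_nonneg _) (hMψ 0)
  have hMψd0 : 0 ≤ Mψd := le_trans (abs_nonneg _) (hMψd 0)
  have hl2 : (0:ℝ) ≤ lam ^ 2 := sq_nonneg lam
  have hL0 : (0:ℝ) ≤ (L:ℝ) := L.coe_nonneg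
  set p := P x u with hp
  set q := P y u with hq
  -- Lipschitz bound on the prox in the parameter
  have hpq : |p - q| ≤ η * lam ^ 2 * Mψ := by
    have e1 := hP x u hx
    have e2 := hP y u hy
    have hx2 : 0 ≤ x * lam ^ 2 := mul_nonneg hx hl2
    have hDE : 0 ≤ (p - q) * (x * lam ^ 2 * (ψ p - ψ q)) := by
      rcases le_total p q with h | h
      · have h' := hmono h
        have h1 : 0 ≤ (q - p) * (x * lam ^ 2 * (ψ q - ψ p)) :=
          mul_nonneg (sub_nonneg.mpr h) (mul_nonneg hx2 (sub_nonneg.mpr h'))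
        nlinarith [h1]
      · have h' := hmono h
        have h1 : 0 ≤ (p - q) * (x * lam ^ 2 * (ψ p - ψ q)) :=
          mul_nonneg (sub_nonneg.mpr h) (mul_nonneg hx2 (sub_nonneg.mpr h'))
        exact h1
    have step1 : |p - q| ≤ |p - q + x * lam ^ 2 * (ψ p - ψ q)| := by
      have hsq : (p - q) ^ 2 ≤ |p - q + x * lam ^ 2 * (ψ p - ψ q)| ^ 2 := by
        rw [sq_abs]; nlinarith [sq_nonneg (x * lam ^ 2 * (ψ p - ψ q))]
      exact abs_le.mpr (abs_le_of_sq_le_sq' hsq (abs_nonneg _))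
    have step2 : p - q + x * lam ^ 2 * (ψ p - ψ q) = (y - x) * lam ^ 2 * ψ q := by
      have : p + x * lam ^ 2 * ψ p = q + y * lam ^ 2 * ψ q := by rw [e1, e2]
      nlinarith [this]
    calc |p - q| ≤ |(y - x) * lam ^ 2 * ψ q| := by rw [← step2]; exact step1
      _ = |y - x| * lam ^ 2 * |ψ q| := by
          rw [abs_mul, abs_mul, abs_of_nonneg hl2]
      _ ≤ η * lam ^ 2 * Mψ := by
          have h1 : |y - x| ≤ η := by rwa [abs_sub_comm]
          have h2 : |ψ q| ≤ Mψ := hMψ q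
          exact mul_le_mul (mul_le_mul_of_nonneg_right h1 hl2) h2 (abs_nonneg _)
            (mul_nonneg hη hl2)
  set a := x * lam ^ 2 * ψd p with ha
  set b := y * lam ^ 2 * ψd q with hb
  have ha0 : 0 ≤ a := mul_nonneg (mul_nonneg hx hl2) (hψd_nonneg p)
  have hb0 : 0 ≤ b := mul_nonneg (mul_nonneg hy hl2) (hψd_nonneg q)
  have ha1 : (0:ℝ) < 1 + a := by linarith
  have hb1 : (0:ℝ) < 1 + b := by linarith
  have key : |1 / (1 + a) - 1 / (1 + b)| ≤ |a - b| := by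
    rw [div_sub_div _ _ (ne_of_gt ha1) (ne_of_gt hb1)]
    rw [abs_div]
    have hnum : |1 * (1 + b) - (1 + a) * 1| = |a - b| := by
      rw [abs_sub_comm]; ring_nf
    rw [hnum]
    have hden : (1:ℝ) ≤ |(1 + a) * (1 + b)| := by
      rw [abs_of_pos (mul_pos ha1 hb1)]; nlinarith
    exact div_le_self (abs_nonneg _) hden
  have hab : |a - b| ≤ η * (lam ^ 2 * Mψd + B * (L:ℝ) * lam ^ 4 * Mψ) := by
    have hsplit : a - b = (x - y) * lam ^ 2 * ψd p + y * lam ^ 2 * (ψd p - ψd q) := by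
      rw [ha, hb]; ring
    have hLippq : |ψd p - ψd q| ≤ (L:ℝ) * |p - q| := by
      have := hLip.dist_le_mul p q
      rwa [Real.dist_eq, Real.dist_eq] at this
    calc |a - b| ≤ |(x - y) * lam ^ 2 * ψd p| + |y * lam ^ 2 * (ψd p - ψd q)| := by
          rw [hsplit]; exact abs_add_le _ _
      _ = |x - y| * lam ^ 2 * |ψd p| + y * lam ^ 2 * |ψd p - ψd q| := by
          rw [abs_mul, abs_mul, abs_mul, abs_mul, abs_of_nonneg hl2, abs_of_nonneg hy]
      _ ≤ η * lam ^ 2 * Mψd + B * lam ^ 2 * ((L:ℝ) * (η * lam ^ 2 * Mψ)) := by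
          have h1 := hMψd p
          have h2 : |ψd p - ψd q| ≤ (L:ℝ) * (η * lam ^ 2 * Mψ) :=
            le_trans hLippq (mul_le_mul_of_nonneg_left hpq hL0)
          have t1 : |x - y| * lam ^ 2 * |ψd p| ≤ η * lam ^ 2 * Mψd :=
            mul_le_mul (mul_le_mul_of_nonneg_right hxy hl2) h1 (abs_nonneg _)
              (mul_nonneg hη hl2)
          have t2 : y * lam ^ 2 * |ψd p - ψd q|
              ≤ B * lam ^ 2 * ((L:ℝ) * (η * lam ^ 2 * Mψ)) :=
            mul_le_mul (mul_le_mul_of_nonneg_right hyB hl2) h2 (abs_nonneg _)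
              (mul_nonneg hB.le hl2)
          linarith
      _ = η * (lam ^ 2 * Mψd + B * (L:ℝ) * lam ^ 4 * Mψ) := by ring
  exact le_trans key hab
end

section
/- Let W be a square-integrable function of n independent random variables Z₁,…,Zₙ, and for each i let W_{(i)} be any square-integrable function of (Z_j)_{j≠i}. Then Var(W) ≤ Σ_{i=1}^n E[(W − W_{(i)})²]. -/
open MeasureTheory ProbabilityTheory
open scoped BigOperators

namespace ES

variable {Ω : Type*} {m m₁ m₂ m₃ : MeasurableSpace Ω} [m0 : MeasurableSpace Ω] {μ : Measure Ω}
  [IsProbabilityMeasure μ]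

lemma measurable_pi {α δ : Type*} {π : δ → Type*} {m : MeasurableSpace α}
    [∀ a, MeasurableSpace (π a)] {g : α → ∀ a, π a}
    (h : ∀ a, Measurable[m] fun x => g x a) : Measurable[m] g :=
  measurable_pi_iff.mpr h

lemma integrable_mul {f g : Ω → ℝ} (hf : MemLp f 2 μ) (hg : MemLp g 2 μ) :
    Integrable (fun x => f x * g x) μ := by
  have h : MemLp (f • g) 1 μ := 
    haveI : ENNReal.HolderTriple 2 2 1 := ⟨by simp [ENNReal.inv_two_add_inv_two]⟩
    hg.smul hf
  exact memLp_one_iff_integrable.mp h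

lemma memℒp_two_condexp (hm : m ≤ m0) {f : Ω → ℝ}
    (hf : MemLp f 2 μ) : MemLp (μ[f|m]) 2 μ := by
  set F2 : Lp ℝ 2 μ := hf.toLp f with hF2
  set c : Lp ℝ 2 μ := ((condExpL2 ℝ ℝ hm F2 : lpMeas ℝ ℝ m 2 μ) : Lp ℝ 2 μ) with hc
  have hcf : (c : Ω → ℝ) =ᵐ[μ] μ[f|m] := by
    refine ae_eq_condExp_of_forall_setIntegral_eq hm (hf.integrable one_le_two)
      (fun s _ _ => ((Lp.memLp c).integrable one_le_two).integrableOn)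
      (fun s hs hμs => ?_) (aestronglyMeasurable_condExpL2 hm F2)
    rw [hc, integral_condExpL2_eq hm F2 hs hμs.ne]
    exact setIntegral_congr_ae (hm s hs) ((hf.coeFn_toLp).mono fun x hx _ => hx)
  exact (Lp.memLp c).ae_eq hcf

lemma integral_mul_condexp_self (hm : m ≤ m0) {q : Ω → ℝ}
    (hq : MemLp q 2 μ) :
    ∫ x, q x * (μ[q|m]) x ∂μ = ∫ x, ((μ[q|m]) x) ^ 2 ∂μ := by
  have hc2 : MemLp (μ[q|m]) 2 μ := memℒp_two_condexp hm hq
  have hint : Integrable (fun x => (μ[q|m]) x * q x) μ := integrable_mul hc2 hq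
  have hpull : μ[(fun x => (μ[q|m]) x * q x)|m] =ᵐ[μ] fun x => (μ[q|m]) x * (μ[q|m]) x := by
    have := condExp_mul_of_stronglyMeasurable_left (μ := μ) (m := m) stronglyMeasurable_condExp
      (f := μ[q|m]) (g := q) hint (hq.integrable one_le_two)
    exact this
  calc ∫ x, q x * (μ[q|m]) x ∂μ = ∫ x, (μ[q|m]) x * q x ∂μ := by
        simp_rw [mul_comm]
    _ = ∫ x, (μ[(fun x => (μ[q|m]) x * q x)|m]) x ∂μ :=
        (integral_condExp hm (f := fun x => (μ[q|m]) x * q x)).symm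
    _ = ∫ x, (μ[q|m]) x * (μ[q|m]) x ∂μ := integral_congr_ae hpull
    _ = ∫ x, ((μ[q|m]) x) ^ 2 ∂μ := by simp_rw [sq]

lemma integral_sq_sub_condexp_add (hm : m ≤ m0) {q : Ω → ℝ}
    (hq : MemLp q 2 μ) :
    ∫ x, (q x - (μ[q|m]) x) ^ 2 ∂μ = ∫ x, (q x) ^ 2 ∂μ - ∫ x, ((μ[q|m]) x) ^ 2 ∂μ := by
  have hc2 : MemLp (μ[q|m]) 2 μ := memℒp_two_condexp hm hq
  have h1 : Integrable (fun x => (q x) ^ 2) μ := hq.integrable_sq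
  have h2 : Integrable (fun x => ((μ[q|m]) x) ^ 2) μ := hc2.integrable_sq
  have h3 : Integrable (fun x => q x * (μ[q|m]) x) μ := integrable_mul hq hc2
  have h12 : Integrable (fun x => (q x) ^ 2 + ((μ[q|m]) x) ^ 2) μ := h1.add h2
  have h32 : Integrable (fun x => 2 * (q x * (μ[q|m]) x)) μ := h3.const_mul 2
  have hpt : ∀ x, (q x - (μ[q|m]) x) ^ 2
      = ((q x) ^ 2 + ((μ[q|m]) x) ^ 2) - 2 * (q x * (μ[q|m]) x) := by
    intro x; ring
  calc ∫ x, (q x - (μ[q|m]) x) ^ 2 ∂μ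
      = ∫ x, (((q x) ^ 2 + ((μ[q|m]) x) ^ 2) - 2 * (q x * (μ[q|m]) x)) ∂μ := by
        simp_rw [hpt]
    _ = (∫ x, (q x) ^ 2 ∂μ + ∫ x, ((μ[q|m]) x) ^ 2 ∂μ) - 2 * ∫ x, q x * (μ[q|m]) x ∂μ := by
        rw [integral_sub h12 h32, integral_add h1 h2, integral_const_mul]
    _ = ∫ x, (q x) ^ 2 ∂μ - ∫ x, ((μ[q|m]) x) ^ 2 ∂μ := by
        rw [integral_mul_condexp_self hm hq]; ring

lemma integral_sq_condexp_le (hm : m ≤ m0) {q : Ω → ℝ}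
    (hq : MemLp q 2 μ) :
    ∫ x, ((μ[q|m]) x) ^ 2 ∂μ ≤ ∫ x, (q x) ^ 2 ∂μ := by
  have h := integral_sq_sub_condexp_add hm hq
  have h0 : 0 ≤ ∫ x, (q x - (μ[q|m]) x) ^ 2 ∂μ := integral_nonneg fun x => sq_nonneg _
  linarith

lemma integral_sq_sub_condexp_le (hm : m ≤ m0) {q : Ω → ℝ}
    (hq : MemLp q 2 μ) :
    ∫ x, (q x - (μ[q|m]) x) ^ 2 ∂μ ≤ ∫ x, (q x) ^ 2 ∂μ := by
  have h := integral_sq_sub_condexp_add hm hq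
  have h0 : 0 ≤ ∫ x, ((μ[q|m]) x) ^ 2 ∂μ := integral_nonneg fun x => sq_nonneg _
  linarith


lemma condexp_sup_indep {h : Ω → ℝ} (hm₁ : m₁ ≤ m0) (hm₃ : m₃ ≤ m0)
    (h21 : m₂ ≤ m₁) (hsm : StronglyMeasurable[m₁] h) (hint : Integrable h μ)
    (hind : Indep m₁ m₃ μ) : μ[h | m₂ ⊔ m₃] =ᵐ[μ] μ[h | m₂] := by
  have hm₂ : m₂ ≤ m0 := h21.trans hm₁
  have hms : m₂ ⊔ m₃ ≤ m0 := sup_le hm₂ hm₃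
  -- key product rule from independence
  have key : ∀ u : Ω → ℝ, Integrable u μ → StronglyMeasurable[m₁] u →
      ∀ s t : Set Ω, MeasurableSet[m₂] s → MeasurableSet[m₃] t →
      ∫ x in s ∩ t, u x ∂μ = (∫ x in s, u x ∂μ) * (μ t).toReal := by
    intro u hu hum s t hs ht
    have hs1 : MeasurableSet[m₁] s := h21 s hs
    have hXY : IndepFun (s.indicator u) (t.indicator fun _ => (1 : ℝ)) μ := by
      rw [IndepFun_iff_Indep]
      refine indep_of_indep_of_le_left (indep_of_indep_of_le_right hind ?_) ?_
      · exact (measurable_const.indicator ht).comap_le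
      · exact (hum.measurable.indicator hs1).comap_le
    have hXint : Integrable (s.indicator u) μ := hu.indicator (hm₁ s hs1)
    have hYint : Integrable (t.indicator fun _ => (1 : ℝ)) μ :=
      (integrable_const (1 : ℝ)).indicator (hm₃ t ht)
    have hprod := hXY.integral_fun_mul_eq_mul_integral hXint.aestronglyMeasurable hYint.aestronglyMeasurable
    have hpt : ∀ x, s.indicator u x * (t.indicator fun _ => (1 : ℝ)) x
        = (s ∩ t).indicator u x := by
      intro x
      rw [← Set.inter_indicator_mul]
      simp [Set.indicator_apply]
    calc ∫ x in s ∩ t, u x ∂μ = ∫ x, (s ∩ t).indicator u x ∂μ :=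
          (integral_indicator ((hm₂ s hs).inter (hm₃ t ht))).symm
      _ = ∫ x, s.indicator u x * (t.indicator fun _ => (1 : ℝ)) x ∂μ := by
          simp_rw [hpt]
      _ = (∫ x, s.indicator u x ∂μ) * ∫ x, (t.indicator fun _ => (1 : ℝ)) x ∂μ := hprod
      _ = (∫ x in s, u x ∂μ) * (μ t).toReal := by
          rw [integral_indicator (hm₂ s hs), integral_indicator (hm₃ t ht)]
          simp [Measure.real]
  -- the generating π-system
  set C : Set (Set Ω) :=
    {v | ∃ s t : Set Ω, MeasurableSet[m₂] s ∧ MeasurableSet[m₃] t ∧ v = s ∩ t} with hC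
  have hgen : m₂ ⊔ m₃ = MeasurableSpace.generateFrom C := by
    refine le_antisymm (sup_le ?_ ?_) (MeasurableSpace.generateFrom_le ?_)
    · intro s hs
      exact MeasurableSpace.measurableSet_generateFrom
        ⟨s, Set.univ, hs, MeasurableSet.univ, (Set.inter_univ s).symm⟩
    · intro t ht
      exact MeasurableSpace.measurableSet_generateFrom
        ⟨Set.univ, t, MeasurableSet.univ, ht, (Set.univ_inter t).symm⟩
    · rintro v ⟨s, t, hs, ht, rfl⟩
      exact MeasurableSet.inter (le_sup_left (a := m₂) (b := m₃) s hs)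
        (le_sup_right (a := m₂) (b := m₃) t ht)
  have hpi : IsPiSystem C := by
    rintro v ⟨s, t, hs, ht, rfl⟩ v' ⟨s', t', hs', ht', rfl⟩ -
    exact ⟨s ∩ s', t ∩ t', hs.inter hs', ht.inter ht', Set.inter_inter_inter_comm s t s' t'⟩
  -- set integrals agree
  have hset : ∀ v : Set Ω, MeasurableSet[m₂ ⊔ m₃] v →
      ∫ x in v, (μ[h | m₂]) x ∂μ = ∫ x in v, h x ∂μ := by
    refine fun v hv => MeasurableSpace.induction_on_inter (m := m₂ ⊔ m₃)
      (C := fun v _ => ∫ x in v, (μ[h | m₂]) x ∂μ = ∫ x in v, h x ∂μ) hgen hpi ?_ ?_ ?_ ?_ v hv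
    · simp
    · rintro v ⟨s, t, hs, ht, rfl⟩
      rw [key h hint hsm s t hs ht,
        key (μ[h | m₂]) integrable_condExp (stronglyMeasurable_condExp.mono h21) s t hs ht,
        setIntegral_condExp hm₂ hint hs]
    · intro v hv hveq
      have hv0 : MeasurableSet v := hms v hv
      have h1 := integral_add_compl hv0 hint
      have h2 := integral_add_compl hv0 (integrable_condExp (μ := μ) (m := m₂) (f := h))
      have h3 : ∫ x, (μ[h | m₂]) x ∂μ = ∫ x, h x ∂μ := integral_condExp hm₂
      linarith
    · intro v hvd hvm hveq
      have hvm0 : ∀ i, MeasurableSet (v i) := fun i => hms _ (hvm i)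
      rw [integral_iUnion hvm0 hvd hint.integrableOn,
        integral_iUnion hvm0 hvd (integrable_condExp (m := m₂) (f := h)).integrableOn]
      exact tsum_congr hveq
  exact (ae_eq_condExp_of_forall_setIntegral_eq hms hint
    (fun s _ _ => integrable_condExp.integrableOn) (fun s hs _ => hset s hs)
    ⟨μ[h | m₂], stronglyMeasurable_condExp.mono le_sup_left, Filter.EventuallyEq.rfl⟩).symm

end ES

set_option maxHeartbeats 1000000 in
/-- Efron–Stein inequality (weakened form): if `W` is a square-integrable
function of independent random variables `Z₁,…,Zₙ`, and each `W_{(i)}` is a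
square-integrable function of all the `Z_j` except the `i`-th, then
`Var(W) ≤ Σᵢ E[(W - W_{(i)})²]`. -/
theorem stmt19 {Ω : Type*} [MeasurableSpace Ω] (μ : Measure Ω)
    [IsProbabilityMeasure μ]
    (n : ℕ) (E : Fin n → Type*) [∀ i, MeasurableSpace (E i)]
    (Z : ∀ i, Ω → E i) (hmeas : ∀ i, Measurable (Z i))
    (hindep : iIndepFun Z μ)
    (f : (∀ i, E i) → ℝ) (hf : Measurable f)
    (g : Fin n → (∀ i, E i) → ℝ) (hg_meas : ∀ i, Measurable (g i))
    (hg : ∀ i : Fin n, ∀ a b : ∀ j, E j, (∀ j, j ≠ i → a j = b j) → g i a = g i b)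
    (W : Ω → ℝ) (hW : W = fun ω => f fun i => Z i ω)
    (Wi : Fin n → Ω → ℝ) (hWi : ∀ i, Wi i = fun ω => g i fun j => Z j ω)
    (hW2 : MemLp W 2 μ) (hWi2 : ∀ i, MemLp (Wi i) 2 μ) :
    variance W μ ≤ ∑ i, ∫ ω, (W ω - Wi i ω) ^ 2 ∂μ := by
  classical
  obtain ⟨ω₀⟩ : Nonempty Ω := by
    by_contra hc
    rw [not_nonempty_iff] at hc
    have h1 : μ Set.univ = 1 := measure_univ
    rw [Set.univ_eq_empty_iff.mpr hc, measure_empty] at h1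
    exact zero_ne_one h1
  -- filtration and co-sigma-algebras
  set F : ℕ → MeasurableSpace Ω :=
    fun k => ⨆ j : Fin n, ⨆ _ : (j : ℕ) < k, MeasurableSpace.comap (Z j) inferInstance with hFdef
  set G : Fin n → MeasurableSpace Ω :=
    fun i => ⨆ j : Fin n, ⨆ _ : j ≠ i, MeasurableSpace.comap (Z j) inferInstance with hGdef
  have hF_le : ∀ k, F k ≤ ‹MeasurableSpace Ω› :=
    fun k => iSup_le fun j => iSup_le fun _ => (hmeas j).comap_le
  have hG_le : ∀ i, G i ≤ ‹MeasurableSpace Ω› :=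
    fun i => iSup_le fun j => iSup_le fun _ => (hmeas j).comap_le
  have hcF : ∀ (j : Fin n) (k : ℕ), (j : ℕ) < k →
      MeasurableSpace.comap (Z j) inferInstance ≤ F k := by
    intro j k hj
    simp only [hFdef]
    exact le_iSup_of_le j
      (le_iSup (fun _ : (j : ℕ) < k => MeasurableSpace.comap (Z j) inferInstance) hj)
  have hcG : ∀ (j i : Fin n), j ≠ i →
      MeasurableSpace.comap (Z j) inferInstance ≤ G i := by
    intro j i hj
    simp only [hGdef]
    exact le_iSup_of_le j
      (le_iSup (fun _ : j ≠ i => MeasurableSpace.comap (Z j) inferInstance) hj)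
  have hF_mono : ∀ {a b : ℕ}, a ≤ b → F a ≤ F b := by
    intro a b hab
    exact iSup_le fun j => iSup_le fun hj => hcF j b (lt_of_lt_of_le hj hab)
  have hFG : ∀ (k : ℕ) (hk : k < n), F k ≤ G ⟨k, hk⟩ := by
    intro k hk
    exact iSup_le fun j => iSup_le fun hj =>
      hcG j ⟨k, hk⟩ fun hji => (Nat.ne_of_lt hj) (congrArg Fin.val hji)
  have hFsucc : ∀ (k : ℕ) (hk : k < n),
      F (k + 1) = F k ⊔ MeasurableSpace.comap (Z ⟨k, hk⟩) inferInstance := by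
    intro k hk
    refine le_antisymm (iSup_le fun j => iSup_le fun hj => ?_)
      (sup_le (hF_mono (Nat.le_succ k)) ?_)
    · rcases Nat.lt_succ_iff_lt_or_eq.mp hj with hlt | heq
      · exact le_sup_of_le_left (hcF j k hlt)
      · have : j = ⟨k, hk⟩ := Fin.ext heq
        rw [this]; exact le_sup_right
    · exact hcF ⟨k, hk⟩ (k + 1) (Nat.lt_succ_self k)
  have hIndep : ∀ i : Fin n,
      Indep (G i) (MeasurableSpace.comap (Z i) inferInstance) μ := by
    intro i
    have hii : iIndep (fun j => MeasurableSpace.comap (Z j) inferInstance) μ := hindep.iIndep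
    have h := indep_biSup_compl (fun j => (hmeas j).comap_le) hii {i}ᶜ
    rw [compl_compl] at h
    have h1 : (⨆ j ∈ ({i}ᶜ : Set (Fin n)), MeasurableSpace.comap (Z j) inferInstance) = G i := by
      simp only [hGdef, Set.mem_compl_iff, Set.mem_singleton_iff]
    have h2 : (⨆ j ∈ ({i} : Set (Fin n)), MeasurableSpace.comap (Z j) inferInstance)
        = MeasurableSpace.comap (Z i) inferInstance := by
      simp
    rw [h1, h2] at h
    exact h
  -- the martingale
  set Y : ℕ → Ω → ℝ := fun k => μ[W | F k] with hYdef
  set D : ℕ → Ω → ℝ := fun k => Y (k + 1) - Y k with hDdef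
  have hY2 : ∀ k, MemLp (Y k) 2 μ := fun k => ES.memℒp_two_condexp (hF_le k) hW2
  have hD2 : ∀ k, MemLp (D k) 2 μ := fun k => (hY2 (k + 1)).sub (hY2 k)
  have hZF : ∀ j : Fin n, Measurable[F n] (Z j) := by
    intro j
    intro s hs
    exact hcF j n j.isLt _ ⟨s, hs, rfl⟩
  have hWn : StronglyMeasurable[F n] W := by
    rw [hW]
    have hpi : Measurable[F n] fun ω => (fun i => Z i ω) := ES.measurable_pi hZF
    exact (hf.comp hpi).stronglyMeasurable
  have hYn : Y n = W := by
    show μ[W | F n] = W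
    exact condExp_of_stronglyMeasurable (hF_le n) hWn (hW2.integrable one_le_two)
  have hY0 : Y 0 = fun _ => ∫ x, W x ∂μ := by
    have hbot : F 0 = ⊥ :=
      le_antisymm (iSup_le fun j => iSup_le fun hj => absurd hj (Nat.not_lt_zero _)) bot_le
    show μ[W | F 0] = fun _ => ∫ x, W x ∂μ
    rw [hbot, condExp_bot]
  have htel : W - (fun _ => ∫ x, W x ∂μ) = ∑ k ∈ Finset.range n, D k := by
    rw [← hY0, ← hYn]
    exact (Finset.sum_range_sub Y n).symm
  have hvar : variance W μ = ∫ x, (∑ k ∈ Finset.range n, D k x) ^ 2 ∂μ := by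
    rw [variance_eq_integral hW2.aemeasurable]
    refine integral_congr_ae (Filter.Eventually.of_forall fun x => ?_)
    have hx := congrFun htel x
    simp only [Pi.sub_apply, Finset.sum_apply] at hx
    beta_reduce
    rw [hx]
  have hDD : ∀ k l, Integrable (fun x => D k x * D l x) μ :=
    fun k l => ES.integrable_mul (hD2 k) (hD2 l)
  have hexp : ∫ x, (∑ k ∈ Finset.range n, D k x) ^ 2 ∂μ
      = ∑ k ∈ Finset.range n, ∑ l ∈ Finset.range n, ∫ x, D k x * D l x ∂μ := by
    have hpt : ∀ x, (∑ k ∈ Finset.range n, D k x) ^ 2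
        = ∑ k ∈ Finset.range n, ∑ l ∈ Finset.range n, D k x * D l x := by
      intro x; rw [sq, Finset.sum_mul_sum]
    simp_rw [hpt]
    rw [integral_finset_sum _ fun k _ =>
      integrable_finset_sum _ fun l _ => hDD k l]
    exact Finset.sum_congr rfl fun k _ => integral_finset_sum _ fun l _ => hDD k l
  have horth : ∀ k l, k < l → ∫ x, D k x * D l x ∂μ = 0 := by
    intro k l hkl
    have hDkm : StronglyMeasurable[F l] (D k) :=
      (stronglyMeasurable_condExp.mono (hF_mono (Nat.succ_le_of_lt hkl))).sub
        (stronglyMeasurable_condExp.mono (hF_mono hkl.le))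
    have hkey : ∀ j : ℕ, ∫ x, D k x * Y j x ∂μ
        = ∫ x, D k x * (μ[Y j | F l]) x ∂μ := by
      intro j
      have hmul_int : Integrable (D k * Y j) μ := by
        have := ES.integrable_mul (hD2 k) (hY2 j)
        exact this
      have hpull := condExp_mul_of_stronglyMeasurable_left (μ := μ) hDkm hmul_int
        ((hY2 j).integrable one_le_two)
      calc ∫ x, D k x * Y j x ∂μ
          = ∫ x, (μ[(D k * Y j) | F l]) x ∂μ := (integral_condExp (hF_le l)).symm
        _ = ∫ x, D k x * (μ[Y j | F l]) x ∂μ := by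
            refine integral_congr_ae (hpull.mono fun x hx => ?_)
            simpa [Pi.mul_apply] using hx
    have htow : ∀ j : ℕ, l ≤ j → μ[Y j | F l] =ᵐ[μ] Y l := by
      intro j hj
      exact condExp_condExp_of_le (hF_mono hj) (hF_le j)
    have hYle : ∫ x, D k x * Y (l + 1) x ∂μ = ∫ x, D k x * Y l x ∂μ := by
      rw [hkey (l + 1), hkey l]
      refine integral_congr_ae ?_
      filter_upwards [htow (l + 1) (Nat.le_succ l), htow l le_rfl] with x h1 h2
      rw [h1, h2]
    have hfun : (fun x => D k x * D l x)
        = fun x => D k x * Y (l + 1) x - D k x * Y l x := by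
      funext x
      show D k x * (Y (l + 1) - Y l) x = _
      simp only [Pi.sub_apply]; ring
    rw [hfun, integral_sub (ES.integrable_mul (hD2 k) (hY2 (l + 1)))
      (ES.integrable_mul (hD2 k) (hY2 l)), hYle, sub_self]
  have hdiag : ∑ k ∈ Finset.range n, ∑ l ∈ Finset.range n, ∫ x, D k x * D l x ∂μ
      = ∑ k ∈ Finset.range n, ∫ x, (D k x) ^ 2 ∂μ := by
    refine Finset.sum_congr rfl fun k hk => ?_
    rw [Finset.sum_eq_single k]
    · simp_rw [← sq]
    · intro l _ hne
      rcases hne.lt_or_gt with h | h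
      · rw [show (∫ x, D k x * D l x ∂μ) = ∫ x, D l x * D k x ∂μ from
          integral_congr_ae (Filter.Eventually.of_forall fun x => mul_comm _ _)]
        exact horth l k h
      · exact horth k l h
    · exact fun hk' => absurd hk hk'
  -- the per-coordinate bound
  have hbound : ∀ (k : ℕ) (hk : k < n),
      ∫ x, (D k x) ^ 2 ∂μ ≤ ∫ x, (W x - Wi ⟨k, hk⟩ x) ^ 2 ∂μ := by
    intro k hk
    set i : Fin n := ⟨k, hk⟩ with hi
    have hWiG : StronglyMeasurable[G i] (Wi i) := by
      have hφ : Measurable[G i]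
          (fun ω => Function.update (fun j => Z j ω) i (Z i ω₀)) := by
        refine ES.measurable_pi fun j => ?_
        rcases eq_or_ne j i with rfl | hj
        · simp only [Function.update_self]
          exact measurable_const
        · have hcoord : (fun ω => Function.update (fun j' => Z j' ω) i (Z i ω₀) j)
              = fun ω => Z j ω := by
            funext ω; rw [Function.update_of_ne hj]
          rw [hcoord]
          intro s hs
          exact hcG j i hj _ ⟨s, hs, rfl⟩
      have heq : Wi i = fun ω => g i (Function.update (fun j => Z j ω) i (Z i ω₀)) := by
        rw [hWi i]; funext ω
        exact hg i _ _ fun j hj => (Function.update_of_ne hj (Z i ω₀) (fun j' => Z j' ω)).symm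
      rw [heq]
      exact ((hg_meas i).comp hφ).stronglyMeasurable
    have hswap : μ[Wi i | F (k + 1)] =ᵐ[μ] μ[Wi i | F k] := by
      rw [hFsucc k hk]
      exact ES.condexp_sup_indep (hG_le i) ((hmeas i).comap_le) (hFG k hk) hWiG
        ((hWi2 i).integrable one_le_two) (hIndep i)
    set V : Ω → ℝ := fun x => W x - Wi i x with hV
    have hV2 : MemLp V 2 μ := hW2.sub (hWi2 i)
    have hVint : Integrable V μ := hV2.integrable one_le_two
    have hWiInt : Integrable (Wi i) μ := (hWi2 i).integrable one_le_two
    have hsplit : ∀ l : ℕ, μ[W | F l] =ᵐ[μ] fun x => (μ[V | F l]) x + (μ[Wi i | F l]) x := by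
      intro l
      have hWsum : W = V + Wi i := by funext x; simp [hV]
      have h2 := condExp_add hVint hWiInt (m := F l)
      rw [hWsum]
      filter_upwards [h2] with x hx
      simpa using hx
    have hDae : D k =ᵐ[μ] fun x => (μ[V | F (k + 1)]) x - (μ[V | F k]) x := by
      filter_upwards [hsplit (k + 1), hsplit k, hswap] with x h1 h2 h3
      have : D k x = (μ[W | F (k + 1)]) x - (μ[W | F k]) x := by
        rfl
      rw [this, h1, h2, h3]
      ring
    set P : Ω → ℝ := μ[V | F k] with hP
    have hP2 : MemLp P 2 μ := ES.memℒp_two_condexp (hF_le k) hV2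
    set q : Ω → ℝ := fun x => V x - P x with hq
    have hq2 : MemLp q 2 μ := hV2.sub hP2
    have hPsm : StronglyMeasurable[F (k + 1)] P :=
      stronglyMeasurable_condExp.mono (hF_mono (Nat.le_succ k))
    have hPfix : μ[P | F (k + 1)] = P :=
      condExp_of_stronglyMeasurable (hF_le (k + 1)) hPsm (hP2.integrable one_le_two)
    have hqce : μ[q | F (k + 1)] =ᵐ[μ] fun x => (μ[V | F (k + 1)]) x - P x := by
      have hVP : q = V - P := by funext x; simp [hq]
      have h2 := condExp_sub hVint (hP2.integrable one_le_two) (m := F (k + 1))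
      rw [hVP]
      filter_upwards [h2] with x hx
      simp only [Pi.sub_apply] at hx ⊢
      rw [hx, hPfix]
    have hDq : D k =ᵐ[μ] μ[q | F (k + 1)] := by
      filter_upwards [hDae, hqce] with x h1 h2
      rw [h1, h2]
    calc ∫ x, (D k x) ^ 2 ∂μ
        = ∫ x, ((μ[q | F (k + 1)]) x) ^ 2 ∂μ :=
          integral_congr_ae (hDq.mono fun x hx => by simp only [hx])
      _ ≤ ∫ x, (q x) ^ 2 ∂μ := ES.integral_sq_condexp_le (hF_le (k + 1)) hq2
      _ ≤ ∫ x, (V x) ^ 2 ∂μ := ES.integral_sq_sub_condexp_le (hF_le k) hV2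
  -- assemble
  set B : ℕ → ℝ :=
    fun k => if hk : k < n then ∫ x, (W x - Wi ⟨k, hk⟩ x) ^ 2 ∂μ else 0 with hB
  have hsumB : ∑ i : Fin n, ∫ x, (W x - Wi i x) ^ 2 ∂μ = ∑ k ∈ Finset.range n, B k := by
    rw [← Fin.sum_univ_eq_sum_range B n]
    refine Finset.sum_congr rfl fun i _ => ?_
    simp only [hB]
    rw [dif_pos i.isLt]
  have hfinal : ∑ k ∈ Finset.range n, ∫ x, (D k x) ^ 2 ∂μ ≤ ∑ k ∈ Finset.range n, B k := by
    refine Finset.sum_le_sum fun k hk => ?_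
    have hkn := Finset.mem_range.mp hk
    simp only [hB]
    rw [dif_pos hkn]
    exact hbound k hkn
  rw [hvar, hexp, hdiag, hsumB]
  exact hfinal
end
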